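/- Let m = 8, so that ⟨K, K⟩ = 0 in Λ_8. If D ∈ Λ_8 satisfies ⟨D, K⟩ = 0 and ⟨D, D⟩ = 0, then D is an integer multiple of K. (The only isotropic vectors in the orthogonal complement of the canonical class of a rational surface with K² = 0 are the multiples of the canonical class; this underlies the classification of genus-1 pencils: any pencil with D² = D·K = 0 has class r(2s+2f−e_1−⋯−e_8) for some integer r.) -/

import Mathlib

/-- The basis vector `s` of the lattice `Λ_m = ℤ^{m+2}` (coordinate 0). -/
def sV (m : ℕ) : Fin (m + 2) → ℤ := fun i => if (i : ℕ) = 0 then 1 else 0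

/-- The basis vector `f` of the lattice `Λ_m = ℤ^{m+2}` (coordinate 1). -/
def fV (m : ℕ) : Fin (m + 2) → ℤ := fun i => if (i : ℕ) = 1 then 1 else 0

/-- The basis vector `e_j` (for `1 ≤ j ≤ m`) of the lattice `Λ_m = ℤ^{m+2}`
(coordinate `j+1`). -/
def eV (m j : ℕ) : Fin (m + 2) → ℤ := fun i => if (i : ℕ) = j + 1 then 1 else 0

/-- The even intersection form on `Λ_m`: `⟨s,s⟩ = 0`, `⟨s,f⟩ = 1`, `⟨f,f⟩ = 0`,
`⟨s,e_i⟩ = ⟨f,e_i⟩ = 0`, `⟨e_i,e_j⟩ = −δ_{ij}`. -/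
def evenForm (m : ℕ) (u v : Fin (m + 2) → ℤ) : ℤ :=
  u 0 * v 1 + u 1 * v 0 - ∑ i : Fin (m + 2), if 2 ≤ (i : ℕ) then u i * v i else 0

/-- The canonical class `K = −2s − 2f + Σ_{i=1}^m e_i` (even case). -/
def evenK (m : ℕ) : Fin (m + 2) → ℤ :=
  (-2 : ℤ) • sV m + (-2 : ℤ) • fV m + ∑ j ∈ Finset.Icc 1 m, eV m j

/-- The even simple roots: `σ_0 = s − f`, `σ_1 = f − e_1 − e_2`,
`σ_k = e_{k−1} − e_k` for `2 ≤ k ≤ m`. -/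
def evenRoot (m k : ℕ) : Fin (m + 2) → ℤ :=
  if k = 0 then sV m - fV m
  else if k = 1 then fV m - eV m 1 - eV m 2
  else eV m (k - 1) - eV m k

/-- For `m = 8` (so `⟨K, K⟩ = 0` in `Λ_8`): if `D ∈ Λ_8` satisfies `⟨D, K⟩ = 0` and
`⟨D, D⟩ = 0`, then `D` is an integer multiple of `K`.  (The only isotropic vectors in
the orthogonal complement of the canonical class are its multiples.) -/
theorem isotropic_in_K_perp_is_multiple_of_K (D : Fin (8 + 2) → ℤ)
    (hK : evenForm 8 D (evenK 8) = 0) (hD : evenForm 8 D D = 0) :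
    ∃ r : ℤ, D = r • evenK 8 := by
  have hKval : evenK 8 = ![-2,-2,1,1,1,1,1,1,1,1] := by decide
  rw [hKval] at hK
  simp [evenForm, Fin.sum_univ_succ] at hK hD
  have e3 : (Fin.succ 2 : Fin 10) = 3 := rfl
  have e4 : ((Fin.succ 2).succ : Fin 10) = 4 := rfl
  have e5 : ((Fin.succ 2).succ.succ : Fin 10) = 5 := rfl
  have e6 : ((Fin.succ 2).succ.succ.succ : Fin 10) = 6 := rfl
  have e7 : ((Fin.succ 2).succ.succ.succ.succ : Fin 10) = 7 := rfl
  have e8 : ((Fin.succ 2).succ.succ.succ.succ.succ : Fin 10) = 8 := rfl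
  have e9 : ((Fin.succ 2).succ.succ.succ.succ.succ.succ : Fin 10) = 9 := rfl

  have key : 4*(D 0 - D 1)^2 + ((D 2 - D 3)^2 + (D 2 - D 4)^2 + (D 2 - D 5)^2 + (D 2 - D 6)^2 + (D 2 - D 7)^2 + (D 2 - D 8)^2 + (D 2 - D 9)^2 + (D 3 - D 4)^2 + (D 3 - D 5)^2 + (D 3 - D 6)^2 + (D 3 - D 7)^2 + (D 3 - D 8)^2 + (D 3 - D 9)^2 + (D 4 - D 5)^2 + (D 4 - D 6)^2 + (D 4 - D 7)^2 + (D 4 - D 8)^2 + (D 4 - D 9)^2 + (D 5 - D 6)^2 + (D 5 - D 7)^2 + (D 5 - D 8)^2 + (D 5 - D 9)^2 + (D 6 - D 7)^2 + (D 6 - D 8)^2 + (D 6 - D 9)^2 + (D 7 - D 8)^2 + (D 7 - D 9)^2 + (D 8 - D 9)^2) = 0 := by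
    linear_combination (-8) * hD - (2*D 0 + 2*D 1 - (D 2 + D 3 + D 4 + D 5 + D 6 + D 7 + D 8 + D 9)) * hK
  have n0 : (0:ℤ) ≤ (D 0 - D 1)^2 := sq_nonneg _
  have n1 : (0:ℤ) ≤ (D 2 - D 3)^2 := sq_nonneg _
  have n2 : (0:ℤ) ≤ (D 2 - D 4)^2 := sq_nonneg _
  have n3 : (0:ℤ) ≤ (D 2 - D 5)^2 := sq_nonneg _
  have n4 : (0:ℤ) ≤ (D 2 - D 6)^2 := sq_nonneg _
  have n5 : (0:ℤ) ≤ (D 2 - D 7)^2 := sq_nonneg _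
  have n6 : (0:ℤ) ≤ (D 2 - D 8)^2 := sq_nonneg _
  have n7 : (0:ℤ) ≤ (D 2 - D 9)^2 := sq_nonneg _
  have n8 : (0:ℤ) ≤ (D 3 - D 4)^2 := sq_nonneg _
  have n9 : (0:ℤ) ≤ (D 3 - D 5)^2 := sq_nonneg _
  have n10 : (0:ℤ) ≤ (D 3 - D 6)^2 := sq_nonneg _
  have n11 : (0:ℤ) ≤ (D 3 - D 7)^2 := sq_nonneg _
  have n12 : (0:ℤ) ≤ (D 3 - D 8)^2 := sq_nonneg _
  have n13 : (0:ℤ) ≤ (D 3 - D 9)^2 := sq_nonneg _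
  have n14 : (0:ℤ) ≤ (D 4 - D 5)^2 := sq_nonneg _
  have n15 : (0:ℤ) ≤ (D 4 - D 6)^2 := sq_nonneg _
  have n16 : (0:ℤ) ≤ (D 4 - D 7)^2 := sq_nonneg _
  have n17 : (0:ℤ) ≤ (D 4 - D 8)^2 := sq_nonneg _
  have n18 : (0:ℤ) ≤ (D 4 - D 9)^2 := sq_nonneg _
  have n19 : (0:ℤ) ≤ (D 5 - D 6)^2 := sq_nonneg _
  have n20 : (0:ℤ) ≤ (D 5 - D 7)^2 := sq_nonneg _
  have n21 : (0:ℤ) ≤ (D 5 - D 8)^2 := sq_nonneg _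
  have n22 : (0:ℤ) ≤ (D 5 - D 9)^2 := sq_nonneg _
  have n23 : (0:ℤ) ≤ (D 6 - D 7)^2 := sq_nonneg _
  have n24 : (0:ℤ) ≤ (D 6 - D 8)^2 := sq_nonneg _
  have n25 : (0:ℤ) ≤ (D 6 - D 9)^2 := sq_nonneg _
  have n26 : (0:ℤ) ≤ (D 7 - D 8)^2 := sq_nonneg _
  have n27 : (0:ℤ) ≤ (D 7 - D 9)^2 := sq_nonneg _
  have n28 : (0:ℤ) ≤ (D 8 - D 9)^2 := sq_nonneg _
  have hab : (D 0 - D 1) = 0 := by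
    have hle : (D 0 - D 1)^2 ≤ 0 := by linarith
    have h0 : (D 0 - D 1)^2 = 0 := le_antisymm hle (sq_nonneg _)
    exact pow_eq_zero_iff (two_ne_zero) |>.mp h0
  have hc3 : (D 2 - D 3) = 0 := by
    have hle : (D 2 - D 3)^2 ≤ 0 := by linarith
    have h0 : (D 2 - D 3)^2 = 0 := le_antisymm hle (sq_nonneg _)
    exact pow_eq_zero_iff (two_ne_zero) |>.mp h0
  have hc4 : (D 2 - D 4) = 0 := by
    have hle : (D 2 - D 4)^2 ≤ 0 := by linarith
    have h0 : (D 2 - D 4)^2 = 0 := le_antisymm hle (sq_nonneg _)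
    exact pow_eq_zero_iff (two_ne_zero) |>.mp h0
  have hc5 : (D 2 - D 5) = 0 := by
    have hle : (D 2 - D 5)^2 ≤ 0 := by linarith
    have h0 : (D 2 - D 5)^2 = 0 := le_antisymm hle (sq_nonneg _)
    exact pow_eq_zero_iff (two_ne_zero) |>.mp h0
  have hc6 : (D 2 - D 6) = 0 := by
    have hle : (D 2 - D 6)^2 ≤ 0 := by linarith
    have h0 : (D 2 - D 6)^2 = 0 := le_antisymm hle (sq_nonneg _)
    exact pow_eq_zero_iff (two_ne_zero) |>.mp h0
  have hc7 : (D 2 - D 7) = 0 := by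
    have hle : (D 2 - D 7)^2 ≤ 0 := by linarith
    have h0 : (D 2 - D 7)^2 = 0 := le_antisymm hle (sq_nonneg _)
    exact pow_eq_zero_iff (two_ne_zero) |>.mp h0
  have hc8 : (D 2 - D 8) = 0 := by
    have hle : (D 2 - D 8)^2 ≤ 0 := by linarith
    have h0 : (D 2 - D 8)^2 = 0 := le_antisymm hle (sq_nonneg _)
    exact pow_eq_zero_iff (two_ne_zero) |>.mp h0
  have hc9 : (D 2 - D 9) = 0 := by
    have hle : (D 2 - D 9)^2 ≤ 0 := by linarith
    have h0 : (D 2 - D 9)^2 = 0 := le_antisymm hle (sq_nonneg _)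
    exact pow_eq_zero_iff (two_ne_zero) |>.mp h0
  have hKval2 : evenK 8 = fun i : Fin 10 => if (i : ℕ) ≤ 1 then -2 else 1 := by decide
  have g0 : D 0 = D 2 * (-2) := by linarith
  have g1 : D 1 = D 2 * (-2) := by linarith
  have g2 : D 2 = D 2 * 1 := by linarith
  have g3 : D 3 = D 2 * 1 := by linarith
  have g4 : D 4 = D 2 * 1 := by linarith
  have g5 : D 5 = D 2 * 1 := by linarith
  have g6 : D 6 = D 2 * 1 := by linarith
  have g7 : D 7 = D 2 * 1 := by linarith
  have g8 : D 8 = D 2 * 1 := by linarith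
  have g9 : D 9 = D 2 * 1 := by linarith
  refine ⟨D 2, ?_⟩
  funext i
  rw [hKval2]
  fin_cases i
  · exact g0
  · exact g1
  · exact g2
  · exact g3
  · exact g4
  · exact g5
  · exact g6
  · exact g7
  · exact g8
  · exact g9
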